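/- Let G be a non-compact Hausdorff topological group acting continuously on a Hausdorff topological space Σ, and let σ ∈ Σ have relatively compact orbit (closure(O(σ)) is compact). Then L(σ) is nonempty, and L(σ) attracts σ: for every open set W ⊇ L(σ) there exists a compact set K ⊆ G such that g•σ ∈ W for every g ∈ G \ K. -/

import Mathlib

open Set MulAction Pointwise

/-- The recurrence set `Rec(M,N) = {g ∈ G ∣ (g•M) ∩ N ≠ ∅}`. -/
def RecSet (G : Type*) {A : Type*} [SMul G A] (M N : Set A) : Set G :=
  {g : G | ((g • M) ∩ N).Nonempty}

/-- A subset `S` of a topological group is syndetic if `K·S = G` for some compact `K`. -/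
def Syndetic {G : Type*} [Mul G] [TopologicalSpace G] (S : Set G) : Prop :=
  ∃ K : Set G, IsCompact K ∧ K * S = Set.univ

/-- The limit set `L(σ) = ⋂_{K ⊆ G compact} closure {g•σ ∣ g ∈ G \ K}`. -/
def LimitSet (G : Type*) {A : Type*} [TopologicalSpace G] [TopologicalSpace A] [SMul G A]
    (σ : A) : Set A :=
  ⋂ (K : Set G) (_ : IsCompact K), closure ((fun g : G => g • σ) '' Kᶜ)

/-- The set of fixed points of the action. -/
def FixPts (G A : Type*) [SMul G A] : Set A := {σ | ∀ g : G, g • σ = σ}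

/-- The set of periodic points: those whose stabilizer is syndetic. -/
def PerPts (G A : Type*) [Mul G] [TopologicalSpace G] [SMul G A] : Set A :=
  {σ | Syndetic {g : G | g • σ = σ}}

/-- The set of weakly periodic points: those whose stabilizer is not compact. -/
def WPerPts (G A : Type*) [TopologicalSpace G] [SMul G A] : Set A :=
  {σ | ¬ IsCompact {g : G | g • σ = σ}}

/-- The set of almost periodic points: `Rec({σ},U)` is syndetic for every neighborhood
`U` of `σ`. -/
def APerPts (G A : Type*) [Mul G] [TopologicalSpace G] [TopologicalSpace A] [SMul G A] :
    Set A :=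
  {σ | ∀ U ∈ nhds σ, Syndetic {g : G | g • σ ∈ U}}

/-- The set of recurrent points: `σ ∈ L(σ)`. -/
def RecPts (G A : Type*) [TopologicalSpace G] [TopologicalSpace A] [SMul G A] : Set A :=
  {σ | σ ∈ LimitSet G σ}

/-- The set of non-wandering points: `Rec(W,W)` is not relatively compact for any
neighborhood `W` of `σ`. -/
def NWPts (G A : Type*) [TopologicalSpace G] [TopologicalSpace A] [SMul G A] : Set A :=
  {σ | ∀ W ∈ nhds σ, ¬ IsCompact (closure (RecSet G W W))}

/-- If the orbit of `σ` is relatively compact, then `L(σ)` is nonempty and attracts `σ`: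
for every open `W ⊇ L(σ)` there is a compact `K ⊆ G` with `g•σ ∈ W` for all
`g ∈ G \ K`. -/
theorem stmt10 {G A : Type*} [Group G] [TopologicalSpace G] [IsTopologicalGroup G] [T2Space G]
    [TopologicalSpace A] [T2Space A] [MulAction G A] [ContinuousSMul G A]
    (hG : ¬ CompactSpace G) (σ : A)
    (horb : IsCompact (closure (MulAction.orbit G σ))) :
    (LimitSet G σ).Nonempty ∧
    ∀ W : Set A, IsOpen W → LimitSet G σ ⊆ W →
      ∃ K : Set G, IsCompact K ∧ ∀ g : G, g ∉ K → g • σ ∈ W := by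
  have hne : ∀ K : Set G, IsCompact K → Kᶜ.Nonempty := by
    intro K hK
    rw [Set.nonempty_compl]
    intro h
    exact hG (isCompact_univ_iff.mp (h ▸ hK))
  set ι := {K : Set G // IsCompact K}
  haveI : Nonempty ι := ⟨⟨∅, isCompact_empty⟩⟩
  set T : ι → Set A := fun K => closure ((fun g : G => g • σ) '' K.1ᶜ) with hT
  have hTsub : ∀ i : ι, T i ⊆ closure (MulAction.orbit G σ) := by
    intro i
    apply closure_mono
    rintro _ ⟨g, -, rfl⟩
    exact ⟨g, rfl⟩
  have hTcl : ∀ i : ι, IsClosed (T i) := fun i => isClosed_closure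
  have hTc : ∀ i : ι, IsCompact (T i) := fun i =>
    IsCompact.of_isClosed_subset horb (hTcl i) ((hTsub i).trans (by simp [closure_closure]))
  have hTn : ∀ i : ι, (T i).Nonempty := fun i =>
    Set.Nonempty.mono subset_closure ((hne i.1 i.2).image _)
  have hTd : Directed (· ⊇ ·) T := by
    intro i j
    refine ⟨⟨i.1 ∪ j.1, i.2.union j.2⟩, ?_, ?_⟩ <;>
      · apply closure_mono
        apply Set.image_mono
        simp [Set.compl_union, Set.inter_subset_left, Set.inter_subset_right]
  have hL : LimitSet G σ = ⋂ i : ι, T i := by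
    rw [LimitSet]
    rw [Set.iInter_subtype (fun K => IsCompact K) (fun K => closure ((fun g : G => g • σ) '' K.1ᶜ))]
  constructor
  · rw [hL]
    exact IsCompact.nonempty_iInter_of_directed_nonempty_isCompact_isClosed T hTd hTn hTc hTcl
  · intro W hWopen hLW
    have hs : IsCompact (closure (MulAction.orbit G σ) ∩ Wᶜ) :=
      horb.inter_right hWopen.isClosed_compl
    have hempty : (closure (MulAction.orbit G σ) ∩ Wᶜ) ∩ ⋂ i : ι, T i = ∅ := by
      ext x
      simp only [Set.mem_inter_iff, Set.mem_compl_iff, Set.mem_empty_iff_false, iff_false]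
      rintro ⟨⟨-, hxW⟩, hx⟩
      exact hxW (hLW (hL ▸ hx))
    obtain ⟨u, hu⟩ := hs.elim_finite_subfamily_closed T hTcl hempty
    refine ⟨⋃ i ∈ u, (i : ι).1, u.finite_toSet.isCompact_biUnion (fun i _ => i.2), ?_⟩
    intro g hg
    by_contra hgW
    have hgmem : g • σ ∈ (closure (MulAction.orbit G σ) ∩ Wᶜ) ∩ ⋂ i ∈ u, T i := by
      refine ⟨⟨subset_closure ⟨g, rfl⟩, hgW⟩, ?_⟩
      simp only [Set.mem_iInter]
      intro i hi
      have : g ∈ i.1ᶜ := fun hgi => hg (Set.mem_biUnion hi hgi)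
      exact subset_closure ⟨g, this, rfl⟩
    rw [hu] at hgmem
    exact hgmem
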